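/- arXiv:1607.08272 — 2 statements merged into one kernel-verified Lean document; each statement's English description precedes it below -/
import Mathlib

section
/- Let α be algebraic of degree d over ℚ, let r ∈ ℤ, let p be a prime not dividing the leading coefficient a_d of the minimal polynomial f of α over ℤ, and suppose p divides f(r). Then there is a conjugate α' of α and an absolute value |·| on ℚ(α') extending the p-adic absolute value such that |α' - r| < 1. -/
open Polynomial

section Aux
variable {A : Type*} [Field A] [Algebra ℚ A] (p : ℕ) (B : ValuationSubring A)

/-- valuation of a nonzero integer. -/
lemma aux_int_val [hf : Fact p.Prime]
    (hu : ∀ u : ℤ, ¬ (p : ℤ) ∣ u → B.valuation (u : A) = 1)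
    {t : ℤ} (ht : t ≠ 0) :
    B.valuation (t : A) = B.valuation (p : A) ^ (padicValInt p t) := by
  set k := padicValInt p t with hk
  obtain ⟨m, hm⟩ : ((p:ℤ)) ^ k ∣ t := padicValInt_dvd t
  have hpm : ¬ (p : ℤ) ∣ m := by
    intro ⟨c, hc⟩
    have : ((p:ℤ)) ^ (k + 1) ∣ t := ⟨c, by rw [hm, hc]; ring⟩
    rcases (padicValInt_dvd_iff _ _).mp this with h | h
    · exact ht h
    · rw [← hk] at h; omega
  have : (t : A) = (p : A) ^ k * (m : A) := by
    rw [hm]; push_cast; ring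
  rw [this, map_mul, map_pow, hu m hpm, mul_one]

lemma aux_rat_val [hf : Fact p.Prime]
    (hu : ∀ u : ℤ, ¬ (p : ℤ) ∣ u → B.valuation (u : A) = 1)
    {q : ℚ} (hq : q ≠ 0) :
    B.valuation (algebraMap ℚ A q) = B.valuation (p : A) ^ (padicValRat p q) := by
  have : CharZero A := charZero_of_injective_algebraMap (algebraMap ℚ A).injective
  have hπ0 : B.valuation (p : A) ≠ 0 := by
    rw [ne_eq, Valuation.zero_iff, Nat.cast_eq_zero]
    exact hf.out.ne_zero
  have hnum : (q.num : ℚ) ≠ 0 := Int.cast_ne_zero.mpr (Rat.num_ne_zero.mpr hq)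
  have hden : ((q.den : ℤ) : ℚ) ≠ 0 := by
    exact_mod_cast (Nat.cast_ne_zero (R := ℚ)).mpr q.den_nz
  have hqq : algebraMap ℚ A q = (q.num : A) / ((q.den : ℤ) : A) := by
    rw [eq_ratCast (algebraMap ℚ A) q, Rat.cast_def]; push_cast; ring
  rw [hqq, map_div₀, aux_int_val p B hu (Rat.num_ne_zero.mpr hq),
    aux_int_val p B hu (by exact_mod_cast q.den_nz)]
  rw [show padicValRat p q = (padicValInt p q.num : ℤ) - (padicValInt p (q.den : ℤ) : ℤ) by
    simp [padicValRat, padicValInt.of_nat]]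
  rw [← zpow_natCast _ (padicValInt p q.num), ← zpow_natCast _ (padicValInt p (q.den:ℤ)),
    ← zpow_sub₀ hπ0]

end Aux

section Tors
variable {A : Type*} [Field A] [Algebra ℚ A] (p : ℕ) (B : ValuationSubring A)

lemma aux_torsion [hf : Fact p.Prime] [Algebra.IsAlgebraic ℚ A]
    (hu : ∀ u : ℤ, ¬ (p : ℤ) ∣ u → B.valuation (u : A) = 1)
    {x : A} (hx : x ≠ 0) :
    ∃ (n : ℕ) (m : ℤ), 0 < n ∧
      B.valuation x ^ (n : ℤ) = B.valuation (p : A) ^ m := by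
  set v := B.valuation with hv
  set π := B.valuation (p : A) with hπ
  have : CharZero A := charZero_of_injective_algebraMap (algebraMap ℚ A).injective
  have hπ0 : π ≠ 0 := by
    rw [hπ, ne_eq, Valuation.zero_iff, Nat.cast_eq_zero]; exact hf.out.ne_zero
  have hvx : v x ≠ 0 := by rw [hv, ne_eq, Valuation.zero_iff]; exact hx
  have hint : IsIntegral ℚ x := (Algebra.IsAlgebraic.isAlgebraic (R := ℚ) x).isIntegral
  set g := minpoly ℚ x with hg
  have hc0 : g.coeff 0 ≠ 0 := minpoly.coeff_zero_ne_zero hint hx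
  have hdeg : 0 < g.natDegree := minpoly.natDegree_pos hint
  set T : ℕ → A := fun i => algebraMap ℚ A (g.coeff i) * x ^ i with hT
  -- T-valuation formula
  have hvT : ∀ i ∈ g.support, v (T i) = π ^ (padicValRat p (g.coeff i)) * v x ^ (i : ℤ) := by
    intro i hi
    rw [hT]
    simp only [map_mul, map_pow]
    rw [aux_rat_val p B hu (Polynomial.mem_support_iff.mp hi), zpow_natCast]
  -- key extraction from an equality of term-valuations
  have key : ∀ i j : ℕ, i ∈ g.support → j ∈ g.support → j < i → v (T i) = v (T j) →
      ∃ (n : ℕ) (m : ℤ), 0 < n ∧ v x ^ (n : ℤ) = π ^ m := by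
    intro i j hi hj hji heq
    rw [hvT i hi, hvT j hj] at heq
    refine ⟨i - j, padicValRat p (g.coeff j) - padicValRat p (g.coeff i), by omega, ?_⟩
    have hij : ((i - j : ℕ) : ℤ) = (i : ℤ) - (j : ℤ) := by omega
    rw [hij, zpow_sub₀ hvx, zpow_sub₀ hπ0, div_eq_div_iff (zpow_ne_zero _ hvx) (zpow_ne_zero _ hπ0)]
    rw [mul_comm] at heq
    rw [heq]
  -- the support has at least two elements
  have h0s : 0 ∈ g.support := Polynomial.mem_support_iff.mpr hc0
  have hds : g.natDegree ∈ g.support := by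
    rw [Polynomial.mem_support_iff]
    exact Polynomial.coeff_ne_zero_of_eq_degree (Polynomial.degree_eq_natDegree (minpoly.ne_zero hint))
  have hsne : g.support.Nonempty := ⟨0, h0s⟩
  -- pick i maximizing v ∘ T on the support
  obtain ⟨i, his, hi⟩ := g.support.exists_mem_eq_sup' hsne (fun k => v (T k))
  -- the erased set is nonempty
  have hene : (g.support.erase i).Nonempty := by
    rcases eq_or_ne i 0 with rfl | h0
    · exact ⟨g.natDegree, Finset.mem_erase.mpr ⟨by omega, hds⟩⟩
    · exact ⟨0, Finset.mem_erase.mpr ⟨fun h => h0 h.symm, h0s⟩⟩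
  -- T i = - sum of the others
  have hsum : ∑ k ∈ g.support, T k = 0 := by
    have := minpoly.aeval ℚ x
    rw [← hg, Polynomial.aeval_def, Polynomial.eval₂_eq_sum, Polynomial.sum_def] at this
    exact this
  have hTi : T i = - ∑ k ∈ g.support.erase i, T k := by
    have := Finset.add_sum_erase _ T his
    rw [hsum] at this
    linear_combination this
  -- j maximizing on the erased set
  obtain ⟨j, hje, hj⟩ := (g.support.erase i).exists_mem_eq_sup' hene (fun k => v (T k))
  have hle1 : v (T i) ≤ v (T j) := by
    rw [hTi, Valuation.map_neg]
    refine Valuation.map_sum_le v fun k hk => ?_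
    rw [← hj]
    exact Finset.le_sup' (fun k => v (T k)) hk
  have hle2 : v (T j) ≤ v (T i) := by
    rw [← hi]
    exact Finset.le_sup' (fun k => v (T k)) (Finset.mem_of_mem_erase hje)
  have heq : v (T i) = v (T j) := le_antisymm hle1 hle2
  have hij : i ≠ j := fun h => (Finset.mem_erase.mp hje).1 h.symm
  rcases lt_or_gt_of_ne hij with h | h
  · exact key j i (Finset.mem_of_mem_erase hje) his h heq.symm
  · exact key i j his (Finset.mem_of_mem_erase hje) h heq

end Tors

section Abs
variable {A : Type*} [Field A] [Algebra ℚ A] (p : ℕ) (B : ValuationSubring A)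

lemma aux_exists_abs [hf : Fact p.Prime] [Algebra.IsAlgebraic ℚ A]
    (hu : ∀ u : ℤ, ¬ (p : ℤ) ∣ u → B.valuation (u : A) = 1)
    (hπlt : B.valuation (p : A) < 1) :
    ∃ w : AbsoluteValue A ℝ, (∀ q : ℚ, w (algebraMap ℚ A q) = (padicNorm p q : ℝ)) ∧
      ∀ x : A, B.valuation x < 1 → w x < 1 := by
  have : CharZero A := charZero_of_injective_algebraMap (algebraMap ℚ A).injective
  set π := B.valuation (p : A) with hπ
  have hπ0 : π ≠ 0 := by
    rw [hπ, ne_eq, Valuation.zero_iff, Nat.cast_eq_zero]; exact hf.out.ne_zero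
  have hπpos : 0 < π := zero_lt_iff.mpr hπ0
  have hanti : StrictAnti fun n : ℤ => π ^ n := zpow_right_strictAnti₀ hπpos hπlt
  choose nn mm hpos hEq using fun (x : A) (hx : x ≠ 0) => aux_torsion p B hu hx
  classical
  set E : A → ℝ := fun x =>
    if hx : x = 0 then 0 else (p : ℝ) ^ (-((mm x hx : ℝ) / (nn x hx : ℝ))) with hE
  have hp1 : (1 : ℝ) < p := by exact_mod_cast hf.out.one_lt
  have hppos : (0 : ℝ) < p := lt_trans one_pos hp1
  -- well-definedness
  have hW : ∀ (x : A) (hx : x ≠ 0) (a : ℕ) (b : ℤ), 0 < a →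
      B.valuation x ^ (a : ℤ) = π ^ b → E x = (p : ℝ) ^ (-((b : ℝ) / (a : ℝ))) := by
    intro x hx a b ha hab
    have e1 : B.valuation x ^ ((nn x hx : ℤ) * (a : ℤ)) = π ^ (mm x hx * a) := by
      rw [zpow_mul, hEq x hx, ← zpow_mul]
    have e2 : B.valuation x ^ ((nn x hx : ℤ) * (a : ℤ)) = π ^ (b * (nn x hx : ℤ)) := by
      rw [mul_comm ((nn x hx : ℤ)) (a : ℤ), zpow_mul, hab, ← zpow_mul]
    have hinj := zpow_right_injective₀ hπpos (ne_of_lt hπlt) (e1.symm.trans e2)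
    have hrq : (mm x hx : ℝ) / (nn x hx : ℝ) = (b : ℝ) / (a : ℝ) := by
      rw [div_eq_div_iff (by exact_mod_cast (hpos x hx).ne') (by exact_mod_cast ha.ne')]
      exact_mod_cast congrArg (fun z : ℤ => (z : ℝ)) hinj
    rw [hE]
    simp only [dif_neg hx, hrq]
  -- positivity and zero
  have hEpos : ∀ (x : A), x ≠ 0 → 0 < E x := by
    intro x hx
    rw [hE]; simp only [dif_neg hx]
    exact Real.rpow_pos_of_pos hppos _
  have hE0 : E 0 = 0 := by rw [hE]; simp
  -- monotonicity
  have hMono : ∀ (x y : A) (hx : x ≠ 0) (hy : y ≠ 0),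
      B.valuation x ≤ B.valuation y → E x ≤ E y := by
    intro x y hx hy hxy
    have k1 : B.valuation x ^ ((nn x hx : ℤ) * (nn y hy : ℤ)) = π ^ (mm x hx * nn y hy) := by
      rw [zpow_mul, hEq x hx, ← zpow_mul]
    have k2 : B.valuation y ^ ((nn x hx : ℤ) * (nn y hy : ℤ)) = π ^ (mm y hy * nn x hx) := by
      rw [mul_comm ((nn x hx : ℤ)), zpow_mul, hEq y hy, ← zpow_mul]
    have hpow : B.valuation x ^ ((nn x hx) * (nn y hy)) ≤
        B.valuation y ^ ((nn x hx) * (nn y hy)) := pow_le_pow_left' hxy _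
    rw [← zpow_natCast (B.valuation x), ← zpow_natCast (B.valuation y)] at hpow
    push_cast at hpow
    rw [k1, k2] at hpow
    have hmn : mm y hy * (nn x hx : ℤ) ≤ mm x hx * (nn y hy : ℤ) := hanti.le_iff_ge.mp hpow
    rw [hE]; simp only [dif_neg hx, dif_neg hy]
    apply Real.rpow_le_rpow_left_iff hp1 |>.mpr
    rw [neg_le_neg_iff, div_le_div_iff₀ (by exact_mod_cast (hpos y hy)) (by exact_mod_cast (hpos x hx))]
    exact_mod_cast hmn
  -- strict bound below one
  have hLt1 : ∀ (x : A), x ≠ 0 → B.valuation x < 1 → E x < 1 := by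
    intro x hx hlt
    have h1 : B.valuation x ^ (nn x hx) < 1 :=
      pow_lt_one₀ (zero_le') hlt (hpos x hx).ne'
    rw [← zpow_natCast (B.valuation x), hEq x hx] at h1
    have hmpos : (0 : ℤ) < mm x hx := by
      have := hanti.lt_iff_gt.mp (show π ^ (mm x hx) < π ^ (0 : ℤ) by simpa using h1)
      exact this
    rw [hE]; simp only [dif_neg hx]
    apply Real.rpow_lt_one_of_one_lt_of_neg hp1
    rw [neg_lt, neg_zero]
    exact div_pos (by exact_mod_cast hmpos) (by exact_mod_cast hpos x hx)
  -- build the absolute value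
  refine ⟨⟨⟨E, ?_⟩, ?_, ?_, ?_⟩, ?_, ?_⟩
  · -- map_mul
    intro x y
    rcases eq_or_ne x 0 with rfl | hx
    · simp [hE]
    rcases eq_or_ne y 0 with rfl | hy
    · simp [hE]
    have hxy : x * y ≠ 0 := mul_ne_zero hx hy
    have hcast : (((nn x hx) * (nn y hy) : ℕ) : ℤ) = (nn x hx : ℤ) * (nn y hy : ℤ) := by
      push_cast; ring
    have a1 : B.valuation x ^ (((nn x hx) * (nn y hy) : ℕ) : ℤ) = π ^ (mm x hx * nn y hy) := by
      rw [hcast, zpow_mul, hEq x hx, ← zpow_mul]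
    have a2 : B.valuation y ^ (((nn x hx) * (nn y hy) : ℕ) : ℤ) = π ^ (mm y hy * nn x hx) := by
      rw [hcast, mul_comm ((nn x hx : ℤ)), zpow_mul, hEq y hy, ← zpow_mul]
    have k : B.valuation (x * y) ^ (((nn x hx) * (nn y hy) : ℕ) : ℤ) =
        π ^ (mm x hx * nn y hy + mm y hy * nn x hx) := by
      rw [map_mul, mul_zpow, a1, a2, ← zpow_add₀ hπ0]
    have hm := hW (x * y) hxy _ _ (Nat.mul_pos (hpos x hx) (hpos y hy)) k
    have hx' : E x = (p : ℝ) ^ (-((mm x hx : ℝ) / (nn x hx : ℝ))) := by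
      rw [hE]; simp only [dif_neg hx]
    have hy' : E y = (p : ℝ) ^ (-((mm y hy : ℝ) / (nn y hy : ℝ))) := by
      rw [hE]; simp only [dif_neg hy]
    show E (x * y) = E x * E y
    rw [hm, hx', hy', ← Real.rpow_add hppos]
    congr 1
    have hnx : ((nn x hx : ℝ)) ≠ 0 := by exact_mod_cast (hpos x hx).ne'
    have hny : ((nn y hy : ℝ)) ≠ 0 := by exact_mod_cast (hpos y hy).ne'
    push_cast
    field_simp
    ring
  · -- nonneg
    intro x
    show (0 : ℝ) ≤ E x
    rcases eq_or_ne x 0 with rfl | hx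
    · rw [hE0]
    · exact (hEpos x hx).le
  · -- eq_zero
    intro x
    show E x = 0 ↔ x = 0
    constructor
    · intro h
      by_contra hx
      exact (hEpos x hx).ne' h
    · rintro rfl; exact hE0
  · -- add_le
    intro x y
    show E (x + y) ≤ E x + E y
    rcases eq_or_ne x 0 with rfl | hx
    · rw [zero_add, hE0, zero_add]
    rcases eq_or_ne y 0 with rfl | hy
    · rw [add_zero, hE0, add_zero]
    have h0x : 0 ≤ E x := (hEpos x hx).le
    have h0y : 0 ≤ E y := (hEpos y hy).le
    rcases eq_or_ne (x + y) 0 with h | hxy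
    · rw [h, hE0]; positivity
    have hmax := Valuation.map_add B.valuation x y
    rcases le_total (B.valuation x) (B.valuation y) with hc | hc
    · have : B.valuation (x + y) ≤ B.valuation y := le_trans hmax (by simp [max_eq_right hc])
      calc E (x + y) ≤ E y := hMono _ _ hxy hy this
        _ ≤ E x + E y := le_add_of_nonneg_left h0x
    · have : B.valuation (x + y) ≤ B.valuation x := le_trans hmax (by simp [max_eq_left hc])
      calc E (x + y) ≤ E x := hMono _ _ hxy hx this
        _ ≤ E x + E y := le_add_of_nonneg_right h0y
  · -- extends the p-adic norm
    intro q
    rcases eq_or_ne q 0 with rfl | hq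
    · show E _ = _
      rw [map_zero, hE0]
      simp
    have hx : algebraMap ℚ A q ≠ 0 := by
      simp [hq]
    have hval : B.valuation (algebraMap ℚ A q) ^ ((1 : ℕ) : ℤ) = π ^ (padicValRat p q) := by
      rw [Nat.cast_one, zpow_one]
      exact aux_rat_val p B hu hq
    have := hW _ hx 1 (padicValRat p q) one_pos hval
    show E _ = _
    rw [this, padicNorm.eq_zpow_of_nonzero hq]
    push_cast
    rw [show -((padicValRat p q : ℝ) / (1 : ℝ)) = ((-padicValRat p q : ℤ) : ℝ) by push_cast; ring,
      Real.rpow_intCast]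
  · -- strictly less than one
    intro x hlt
    rcases eq_or_ne x 0 with rfl | hx
    · show E 0 < 1
      rw [hE0]; exact one_pos
    · exact hLt1 x hx hlt

end Abs

section Bexists
variable {A : Type*} [Field A] [Algebra ℚ A] (p : ℕ)

lemma aux_exists_B [hf : Fact p.Prime] :
    ∃ B : ValuationSubring A,
      (∀ u : ℤ, ¬ (p : ℤ) ∣ u → B.valuation (u : A) = 1) ∧
      B.valuation (p : A) < 1 ∧
      (∀ t : ℤ, B.valuation (t : A) ≤ 1) := by
  have : CharZero A := charZero_of_injective_algebraMap (algebraMap ℚ A).injective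
  have hpZ : Prime ((p : ℤ)) := Nat.prime_iff_prime_int.mp hf.out
  set P : Ideal ℤ := Ideal.span {((p : ℤ))} with hP
  have hPp : P.IsPrime := (Ideal.span_singleton_prime hpZ.ne_zero).mpr hpZ
  letI := hPp
  set R := Localization.AtPrime P with hR
  have hg : ∀ y : P.primeCompl, IsUnit (algebraMap ℤ A y) := by
    rintro ⟨y, hy⟩
    have hy0 : y ≠ 0 := by
      rintro rfl
      exact hy (Ideal.zero_mem P)
    simpa using isUnit_iff_ne_zero.mpr ((Int.cast_ne_zero (α := A)).mpr hy0)
  set f : R →+* A := IsLocalization.lift (S := R) hg with hfdef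
  obtain ⟨B, hmem, hloc⟩ := IsLocalRing.exists_factor_valuationRing f
  haveI : IsLocalRing ↥B.toSubring := inferInstanceAs (IsLocalRing B)
  have hfz : ∀ t : ℤ, f (algebraMap ℤ R t) = (t : A) := by
    intro t
    rw [hfdef, IsLocalization.lift_eq]
    simp
  refine ⟨B, ?_, ?_, ?_⟩
  · intro u hu
    have humem : u ∈ P.primeCompl := by
      intro hmem'
      exact hu (Ideal.mem_span_singleton.mp hmem')
    have hunit : IsUnit (algebraMap ℤ R u) := IsLocalization.map_units R ⟨u, humem⟩
    have : IsUnit ((f.codRestrict B.toSubring hmem) (algebraMap ℤ R u)) :=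
      hunit.map _
    have := (B.valuation_eq_one_iff _).mp this
    rwa [show (((f.codRestrict B.toSubring hmem) (algebraMap ℤ R u) : B) : A)
        = (u : A) by rw [← hfz u]; rfl] at this
  · have hpmem : ((p : ℤ)) ∈ P := Ideal.mem_span_singleton.mpr dvd_rfl
    have hnon : ¬ IsUnit (algebraMap ℤ R (p : ℤ)) := by
      rw [IsLocalization.AtPrime.isUnit_to_map_iff R P]
      exact fun h => h hpmem
    have hnon2 : ¬ IsUnit ((f.codRestrict B.toSubring hmem) (algebraMap ℤ R (p : ℤ))) :=
      fun h => hnon (hloc.map_nonunit _ h)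
    have hmm : (f.codRestrict B.toSubring hmem) (algebraMap ℤ R (p : ℤ)) ∈
        IsLocalRing.maximalIdeal B :=
      (IsLocalRing.mem_maximalIdeal _).mpr hnon2
    have hvlt := (B.valuation_lt_one_iff _).mp hmm
    have key : (((f.codRestrict B.toSubring hmem) (algebraMap ℤ R (p : ℤ)) : B) : A)
        = (((p : ℤ)) : A) := hfz (p : ℤ)
    rw [key] at hvlt
    simpa using hvlt
  · intro t
    have := B.valuation_le_one ⟨(t : A), by rw [← hfz t]; exact hmem _⟩
    exact this

end Bexists

/-- Let `α` be algebraic of degree `d` over `ℚ`, with primitive integer minimal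
polynomial `f` of leading coefficient `a_d`, let `r ∈ ℤ`, and let `p` be a prime with
`p ∤ a_d` and `p ∣ f(r)`.  Then there is a conjugate `α'` of `α` (a root of `f` in `ℚ̄`)
and an absolute value on `ℚ̄` extending the `p`-adic absolute value such that
`|α' - r| < 1`. -/
theorem exists_conjugate_close_to_r (A : Type*) [Field A] [Algebra ℚ A]
    [IsAlgClosure ℚ A] (d : ℕ) (hd : 1 ≤ d) (α : A)
    (f : Polynomial ℤ) (hdeg : f.natDegree = d) (hirr : Irreducible f)
    (hroot : Polynomial.aeval α f = 0) (r : ℤ) (p : ℕ) (hp : p.Prime)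
    (hlead : ¬ (p : ℤ) ∣ f.leadingCoeff) (hfr : (p : ℤ) ∣ f.eval r) :
    ∃ (α' : A) (v : AbsoluteValue A ℝ),
      Polynomial.aeval α' f = 0 ∧
      (∀ q : ℚ, v (algebraMap ℚ A q) = (padicNorm p q : ℝ)) ∧
      v (α' - algebraMap ℚ A (r : ℚ)) < 1 := by
  haveI : Fact p.Prime := ⟨hp⟩
  haveI : IsAlgClosed A := IsAlgClosure.isAlgClosed (R := ℚ)
  haveI : Algebra.IsAlgebraic ℚ A := IsAlgClosure.isAlgebraic
  have hCZ : CharZero A := charZero_of_injective_algebraMap (algebraMap ℚ A).injective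
  obtain ⟨B, hu, hπlt, hle⟩ := aux_exists_B (A := A) p
  have hπ0 : B.valuation ((p : ℕ) : A) ≠ 0 := by
    rw [ne_eq, Valuation.zero_iff, Nat.cast_eq_zero]; exact hp.ne_zero
  -- the mapped polynomial and its roots
  set F := f.map (algebraMap ℤ A) with hFdef
  have hinj : Function.Injective (algebraMap ℤ A) := (algebraMap ℤ A).injective_int
  have hf0 : f ≠ 0 := hirr.ne_zero
  have hF0 : F ≠ 0 := by
    rw [hFdef, ne_eq, Polynomial.map_eq_zero_iff hinj]
    exact hf0
  have hsplit : F.Splits := IsAlgClosed.splits F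
  have hprod := Polynomial.Splits.eq_prod_roots hsplit
  -- evaluate F at r
  have heval : F.eval ((r : ℤ) : A) = ((f.eval r : ℤ) : A) := by
    rw [hFdef, show algebraMap ℤ A = Int.castRingHom A from rfl, Polynomial.eval_intCast_map]
    rfl
  -- valuation of f.eval r is < 1
  obtain ⟨t, ht⟩ := hfr
  have hvfr : B.valuation ((f.eval r : ℤ) : A) < 1 := by
    rw [ht]
    push_cast
    rw [map_mul]
    calc B.valuation ((p : ℕ) : A) * B.valuation ((t : ℤ) : A)
        ≤ B.valuation ((p : ℕ) : A) * 1 := mul_le_mul_right (hle t) _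
      _ = B.valuation ((p : ℕ) : A) := mul_one _
      _ < 1 := hπlt
  -- leading coefficient has valuation 1
  have hlc : F.leadingCoeff = ((f.leadingCoeff : ℤ) : A) :=
    Polynomial.leadingCoeff_map_of_injective hinj f
  have hvlc : B.valuation F.leadingCoeff = 1 := by
    rw [hlc]
    exact hu f.leadingCoeff hlead
  -- the product of valuations of (r - root) is < 1
  have hveval : B.valuation (F.eval ((r : ℤ) : A)) < 1 := heval ▸ hvfr
  have hexp : B.valuation (F.eval ((r : ℤ) : A)) =
      (F.roots.map fun a => B.valuation (((r : ℤ) : A) - a)).prod := by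
    conv_lhs => rw [hprod]
    rw [Polynomial.eval_mul, Polynomial.eval_C, map_mul, hvlc, one_mul,
      Polynomial.eval_multiset_prod, map_multiset_prod, Multiset.map_map, Multiset.map_map]
    congr 1
    ext a
    simp
  rw [hexp] at hveval
  -- extract a close root
  have hex : ∃ a ∈ F.roots, B.valuation (((r : ℤ) : A) - a) < 1 := by
    by_contra hcon
    push_neg at hcon
    have : (1 : B.ValueGroup) ≤ (F.roots.map fun a => B.valuation (((r : ℤ) : A) - a)).prod := by
      apply Multiset.one_le_prod_of_one_le
      intro x hx
      obtain ⟨a, ha, rfl⟩ := Multiset.mem_map.mp hx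
      exact hcon a ha
    exact absurd hveval (not_lt.mpr this)
  obtain ⟨a, haroot, halt⟩ := hex
  -- a is a root of f
  have haeval : Polynomial.aeval a f = 0 := by
    have := (Polynomial.mem_roots hF0).mp haroot
    rwa [Polynomial.IsRoot, hFdef, Polynomial.eval_map, ← Polynomial.aeval_def] at this
  -- get the absolute value
  obtain ⟨w, hw1, hw2⟩ := aux_exists_abs p B hu hπlt
  refine ⟨a, w, haeval, hw1, ?_⟩
  apply hw2
  have hcast : algebraMap ℚ A ((r : ℤ) : ℚ) = ((r : ℤ) : A) := by
    rw [eq_ratCast]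
    push_cast
    ring
  rw [hcast, Valuation.map_sub_swap]
  exact halt
end

section
/- Let φ(z) ∈ ℂ(z) be a rational map of degree r ≥ 2 such that ∞ is not a periodic point of φ. Then for all n ≥ 2, the n-th iterate φⁿ has at least r^{n-2} distinct poles. -/
open Polynomial OnePoint Filter
open scoped Classical

/-- The self-map of `ℙ¹(F) = F ∪ {∞}` induced by the rational function `u/v`. -/
noncomputable def ratMap {F : Type*} [Field F] (u v : Polynomial F) :
    OnePoint F → OnePoint F :=
  fun P =>
    Option.rec
      (if v.natDegree < u.natDegree then (∞ : OnePoint F)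
       else if u.natDegree < v.natDegree then ((0 : F) : OnePoint F)
       else ((u.leadingCoeff / v.leadingCoeff : F) : OnePoint F))
      (fun z => if v.eval z = 0 then (∞ : OnePoint F)
                else ((u.eval z / v.eval z : F) : OnePoint F))
      P

/-- Bernoulli-type bound: `(x+1)^t * (x-t) ≤ x^(t+1)` for `t < x`. -/
lemma keyNat1 : ∀ (t x : ℕ), t < x → (x+1)^t * (x - t) ≤ x^(t+1) := by
  intro t
  induction t with
  | zero => intro x hx; simp
  | succ t ih =>
    intro x hx
    have htx : t < x := Nat.lt_of_succ_lt hx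
    have h1 := ih x htx
    have key : (x+1) * (x - (t+1)) ≤ x * (x - t) := by
      have ha : x - (t+1) ≤ x := by omega
      have hb : x - t = (x - (t+1)) + 1 := by omega
      rw [hb]
      calc (x+1) * (x - (t+1)) = x * (x - (t+1)) + (x - (t+1)) := by ring
        _ ≤ x * (x - (t+1)) + x := by omega
        _ = x * ((x - (t+1)) + 1) := by ring
    have h3 : (x+1)^(t+1) * (x - (t+1)) * (x - t) ≤ x^(t+2) * (x - t) := by
      calc (x+1)^(t+1) * (x - (t+1)) * (x - t)
          = ((x+1)^t * (x - t)) * ((x+1) * (x - (t+1))) := by ring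
        _ ≤ x^(t+1) * (x * (x - t)) := Nat.mul_le_mul h1 key
        _ = x^(t+2) * (x - t) := by ring
    exact Nat.le_of_mul_le_mul_right h3 (by omega)

/-- `r^(m-1) ≤ m^(r-1)` for `1 ≤ m ≤ r`. -/
lemma keyNat2 (m r : ℕ) (h1 : 1 ≤ m) (h2 : m ≤ r) : r^(m-1) ≤ m^(r-1) := by
  obtain ⟨k, rfl⟩ := Nat.exists_eq_add_of_le h2
  clear h2
  induction k with
  | zero => simp
  | succ k ih =>
    have step : (m + (k+1))^(m-1) ≤ m * (m+k)^(m-1) := by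
      have hk1 := keyNat1 (m-1) (m+k) (by omega)
      have e1 : m + k - (m - 1) = k + 1 := by omega
      have e2 : (m - 1) + 1 = m := by omega
      rw [e1, e2] at hk1
      have e3 : (m+k)^m = (m+k) * (m+k)^(m-1) := by
        have : (m+k)^((m-1)+1) = (m+k) * (m+k)^(m-1) := pow_succ' _ _
        rw [e2] at this
        exact this
      have e4 : (m+k) * (m+k)^(m-1) ≤ (m * (k+1)) * (m+k)^(m-1) := by
        apply Nat.mul_le_mul_right
        nlinarith
      have h5 : (m + (k+1))^(m-1) * (k+1) ≤ (m * (m+k)^(m-1)) * (k+1) := by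
        have e5 : m + (k+1) = m + k + 1 := by omega
        rw [e5]
        calc (m+k+1)^(m-1) * (k+1)
            ≤ (m+k)^m := hk1
          _ = (m+k) * (m+k)^(m-1) := e3
          _ ≤ (m * (k+1)) * (m+k)^(m-1) := e4
          _ = (m * (m+k)^(m-1)) * (k+1) := by ring
      exact Nat.le_of_mul_le_mul_right h5 (by omega)
    calc (m + (k+1))^(m-1) ≤ m * (m+k)^(m-1) := step
      _ ≤ m * m^(m+k-1) := Nat.mul_le_mul_left _ ih
      _ = m^(m+k) := by
          rw [← pow_succ']
          congr 1
          omega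


/-- The "fiber polynomial" over a point of `ℙ¹`. -/
noncomputable def fp (u v : Polynomial ℂ) : OnePoint ℂ → Polynomial ℂ :=
  fun Q => Option.rec v (fun α => u - C α * v) Q

@[simp] lemma fp_infty (u v : Polynomial ℂ) : fp u v ∞ = v := rfl
@[simp] lemma fp_coe (u v : Polynomial ℂ) (α : ℂ) : fp u v (α : OnePoint ℂ) = u - C α * v := rfl

/-- The Wronskian. -/
noncomputable def wr (u v : Polynomial ℂ) : Polynomial ℂ :=
  derivative u * v - u * derivative v

/-- fibers of the rational map as finsets. -/
noncomputable def fiberF (u v : Polynomial ℂ) (Q : OnePoint ℂ) : Finset (OnePoint ℂ) :=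
  ((fp u v Q).roots.toFinset.image (fun z : ℂ => (z : OnePoint ℂ))) ∪
    (if ratMap u v ∞ = Q then {∞} else ∅)

/-- the level sets (iterated preimages of ∞) as finsets -/
noncomputable def LF (u v : Polynomial ℂ) : ℕ → Finset (OnePoint ℂ)
  | 0 => {∞}
  | (k+1) => (LF u v k).biUnion (fun Q => fiberF u v Q)

lemma sum_count_le_card {M : Multiset ℂ} (T : Finset ℂ) :
    ∑ z ∈ T, M.count z ≤ Multiset.card M := by
  have h1 : ∑ z ∈ T, M.count z ≤ ∑ z ∈ M.toFinset, M.count z := by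
    apply Finset.sum_le_sum_of_ne_zero
    intro x _ hx
    rw [Multiset.mem_toFinset]
    exact Multiset.count_pos.mp (Nat.pos_of_ne_zero hx)
  rw [Multiset.toFinset_sum_count_eq] at h1
  exact h1


lemma ratMap_coe {F : Type*} [Field F] (u v : Polynomial F) (z : F) :
    ratMap u v (z : OnePoint F) =
      if v.eval z = 0 then (∞ : OnePoint F) else ((u.eval z / v.eval z : F) : OnePoint F) := rfl

lemma ratMap_infty {F : Type*} [Field F] (u v : Polynomial F) :
    ratMap u v (∞ : OnePoint F) =
      (if v.natDegree < u.natDegree then (∞ : OnePoint F)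
       else if u.natDegree < v.natDegree then ((0 : F) : OnePoint F)
       else ((u.leadingCoeff / v.leadingCoeff : F) : OnePoint F)) := rfl

set_option linter.unusedSectionVars false
section setup

variable (u v : Polynomial ℂ) (hcop : IsCoprime u v) (r : ℕ)
  (hr : r = max u.natDegree v.natDegree) (hr2 : 2 ≤ r)

include hcop hr hr2

lemma hv_ne : v ≠ 0 := by
  rintro rfl
  have := hcop.isUnit_of_dvd' (dvd_refl u) (dvd_zero u)
  have h0 := Polynomial.natDegree_eq_zero_of_isUnit this
  simp [h0] at hr
  omega

lemma hu_ne : u ≠ 0 := by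
  rintro rfl
  have := hcop.isUnit_of_dvd' (dvd_zero v) (dvd_refl v)
  have h0 := Polynomial.natDegree_eq_zero_of_isUnit this
  simp [h0] at hr
  omega

lemma eval_ne_both (z : ℂ) : ¬(u.eval z = 0 ∧ v.eval z = 0) := by
  rintro ⟨h1, h2⟩
  obtain ⟨a, b, hab⟩ := hcop
  have := congrArg (Polynomial.eval z) hab
  simp [h1, h2] at this

lemma fp_ne_zero : ∀ Q : OnePoint ℂ, fp u v Q ≠ 0 := by
  intro Q
  induction Q using OnePoint.rec with
  | infty => simpa using hv_ne u v hcop r hr hr2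
  | coe α =>
    simp only [fp_coe]
    intro h
    have hu : u = C α * v := by linear_combination (norm := ring_nf) h
    rw [hu] at hcop
    have : IsUnit v := by
      obtain ⟨a, b, hab⟩ := hcop
      exact IsUnit.of_mul_eq_one (a * C α + b) (by linear_combination (norm := ring_nf) hab)
    have h0 := Polynomial.natDegree_eq_zero_of_isUnit this
    have h1 : u.natDegree = 0 := by
      rw [hu]
      have := Polynomial.natDegree_mul_le (p := C α) (q := v)
      simp [h0] at this ⊢
      omega
    rw [h1, h0] at hr
    omega

/-- fiber membership for finite points -/
lemma ratMap_coe_eq_iff (z : ℂ) (Q : OnePoint ℂ) :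
    ratMap u v (z : OnePoint ℂ) = Q ↔ (fp u v Q).eval z = 0 := by
  induction Q using OnePoint.rec with
  | infty =>
    rw [ratMap_coe]
    split_ifs with h
    · simpa using h
    · simpa using h
  | coe α =>
    rw [ratMap_coe]
    split_ifs with h
    · simp only [fp_coe, eval_sub, eval_mul, eval_C, h, mul_zero, sub_zero]
      constructor
      · intro hc; exact absurd hc (infty_ne_coe α)
      · intro hc; exact absurd ⟨hc, h⟩ (eval_ne_both u v hcop r hr hr2 z)
    · rw [OnePoint.coe_eq_coe]
      simp only [fp_coe, eval_sub, eval_mul, eval_C]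
      rw [div_eq_iff h]
      constructor
      · intro hc; rw [hc]; ring
      · intro hc; linear_combination hc

lemma natDegree_fp_le (Q : OnePoint ℂ) : (fp u v Q).natDegree ≤ r := by
  induction Q using OnePoint.rec with
  | infty => simp [hr]
  | coe α =>
    simp only [fp_coe]
    refine le_trans (natDegree_sub_le _ _) ?_
    have h1 : (C α * v).natDegree ≤ v.natDegree := natDegree_mul_le.trans (by simp)
    simp only [max_le_iff]
    omega

lemma natDegree_fp_of_ne (Q : OnePoint ℂ) (hQ : ratMap u v ∞ ≠ Q) :
    (fp u v Q).natDegree = r := by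
  have hv0 := hv_ne u v hcop r hr hr2
  rcases lt_trichotomy u.natDegree v.natDegree with hlt | heq | hgt
  · -- r = v.natDegree, ratMap ∞ = 0
    have hφ : ratMap u v ∞ = ((0:ℂ) : OnePoint ℂ) := by
      rw [ratMap_infty, if_neg (by omega), if_pos hlt]
    induction Q using OnePoint.rec with
    | infty => simp [hr, Nat.max_eq_right hlt.le]
    | coe α =>
      have hα : α ≠ 0 := by
        intro h; rw [h] at hQ; exact hQ hφ
      simp only [fp_coe]
      have hd : (C α * v).natDegree = v.natDegree := natDegree_C_mul hα
      rw [natDegree_sub_eq_right_of_natDegree_lt (by omega), hd, hr,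
        Nat.max_eq_right hlt.le]
  · -- equal degrees
    have hc : r = u.natDegree := by omega
    have hφ : ratMap u v ∞ = ((u.leadingCoeff / v.leadingCoeff : ℂ) : OnePoint ℂ) := by
      rw [ratMap_infty, if_neg (by omega), if_neg (by omega)]
    induction Q using OnePoint.rec with
    | infty => simp only [fp_infty]; omega
    | coe α =>
      have hα : α ≠ u.leadingCoeff / v.leadingCoeff := by
        intro h; rw [h] at hQ; exact hQ hφ
      simp only [fp_coe]
      have hcoeff : (u - C α * v).coeff r ≠ 0 := by
        have h1 : (u - C α * v).coeff r = u.coeff r - α * v.coeff r := by simp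
        have e1 : u.coeff r = u.leadingCoeff := by rw [hc]; rfl
        have e2 : v.coeff r = v.leadingCoeff := by rw [hc, heq]; rfl
        rw [h1, e1, e2]
        intro h
        apply hα
        have hlc : v.leadingCoeff ≠ 0 := leadingCoeff_ne_zero.mpr hv0
        field_simp
        linear_combination -h
      exact le_antisymm (natDegree_fp_le u v hcop r hr hr2 (α : OnePoint ℂ))
        (le_natDegree_of_ne_zero hcoeff)
  · -- u bigger: ratMap ∞ = ∞
    have hφ : ratMap u v ∞ = ∞ := by rw [ratMap_infty, if_pos hgt]
    induction Q using OnePoint.rec with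
    | infty => exact absurd hφ hQ
    | coe α =>
      simp only [fp_coe]
      have h1 : (C α * v).natDegree ≤ v.natDegree := natDegree_mul_le.trans (by simp)
      rw [natDegree_sub_eq_left_of_natDegree_lt (by omega), hr, Nat.max_eq_left hgt.le]

lemma natDegree_fp_phi_lt : (fp u v (ratMap u v ∞)).natDegree < r := by
  have hv0 := hv_ne u v hcop r hr hr2
  have hu0 := hu_ne u v hcop r hr hr2
  rcases lt_trichotomy u.natDegree v.natDegree with hlt | heq | hgt
  · have hφ : ratMap u v ∞ = ((0:ℂ) : OnePoint ℂ) := by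
      rw [ratMap_infty, if_neg (by omega), if_pos hlt]
    rw [hφ]
    simp only [fp_coe, map_zero, zero_mul, sub_zero]
    omega
  · have hφ : ratMap u v ∞ = ((u.leadingCoeff / v.leadingCoeff : ℂ) : OnePoint ℂ) := by
      rw [ratMap_infty, if_neg (by omega), if_neg (by omega)]
    rw [hφ]
    simp only [fp_coe]
    set c := u.leadingCoeff / v.leadingCoeff with hc
    have hne := fp_ne_zero u v hcop r hr hr2 ((c : ℂ) : OnePoint ℂ)
    simp only [fp_coe] at hne
    have hcoeff : (u - C c * v).coeff r = 0 := by
      have h1 : (u - C c * v).coeff r = u.coeff r - c * v.coeff r := by simp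
      have hru : r = u.natDegree := by omega
      have e1 : u.coeff r = u.leadingCoeff := by rw [hru]; rfl
      have e2 : v.coeff r = v.leadingCoeff := by rw [hru, heq]; rfl
      rw [h1, e1, e2, hc]
      have hlc : v.leadingCoeff ≠ 0 := leadingCoeff_ne_zero.mpr hv0
      field_simp
      simp
    have hle : (u - C c * v).natDegree ≤ r := natDegree_fp_le u v hcop r hr hr2 (c : OnePoint ℂ) |>.trans_eq (by simp)
    rcases lt_or_eq_of_le hle with h | h
    · exact h
    · exfalso
      have := leadingCoeff_ne_zero.mpr hne
      rw [leadingCoeff, h] at this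
      exact this hcoeff
  · have hφ : ratMap u v ∞ = ∞ := by rw [ratMap_infty, if_pos hgt]
    rw [hφ]
    simp only [fp_infty]
    omega

lemma wr_ne_zero : wr u v ≠ 0 := by
  have hv0 := hv_ne u v hcop r hr hr2
  have hu0 := hu_ne u v hcop r hr hr2
  intro hW
  have hEq : derivative u * v = u * derivative v := by
    have := sub_eq_zero.mp hW
    exact this
  by_cases hdv : derivative v = 0
  · have hu' : derivative u = 0 := by
      have h0 : derivative u * v = 0 := by rw [hEq, hdv, mul_zero]
      rcases mul_eq_zero.mp h0 with h | h
      · exact h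
      · exact absurd h hv0
    have h1 : u.natDegree = 0 := natDegree_eq_zero_of_derivative_eq_zero hu'
    have h2 : v.natDegree = 0 := natDegree_eq_zero_of_derivative_eq_zero hdv
    rw [h1, h2] at hr; omega
  · have hdvd : v ∣ u * derivative v := ⟨derivative u, by rw [← hEq]; ring⟩
    have hdvd2 : v ∣ derivative v := (hcop.symm).dvd_of_dvd_mul_left hdvd
    have h3 : v.natDegree ≤ (derivative v).natDegree := natDegree_le_of_dvd hdvd2 hdv
    have h4 : v.natDegree ≠ 0 := by
      intro h0
      exact hdv (by
        have := Polynomial.eq_C_of_natDegree_eq_zero h0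
        rw [this]; simp)
    have h5 := natDegree_derivative_lt h4
    omega

/-- identity: the Wronskian equals the "Wronskian of the fiber polynomial with v". -/
lemma wr_eq_fp (α : ℂ) :
    wr u v = derivative (fp u v (α : OnePoint ℂ)) * v - fp u v (α : OnePoint ℂ) * derivative v := by
  simp only [fp_coe, derivative_sub, derivative_mul, derivative_C]
  unfold wr
  ring

/-- multiplicity transfer: each extra root multiplicity of a fiber polynomial shows up in wr. -/
lemma mult_le_wr (Q : OnePoint ℂ) (z : ℂ) :
    (fp u v Q).rootMultiplicity z - 1 ≤ (wr u v).rootMultiplicity z := by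
  set e := (fp u v Q).rootMultiplicity z with he
  rw [Polynomial.le_rootMultiplicity_iff (wr_ne_zero u v hcop r hr hr2)]
  have hdvd_fp : (X - C z) ^ e ∣ fp u v Q := Polynomial.pow_rootMultiplicity_dvd _ _
  have hdvd1 : (X - C z) ^ (e - 1) ∣ fp u v Q := dvd_trans (pow_dvd_pow _ (by omega)) hdvd_fp
  have hdvd' : (X - C z) ^ (e - 1) ∣ derivative (fp u v Q) :=
    Polynomial.pow_sub_one_dvd_derivative_of_pow_dvd hdvd_fp
  induction Q using OnePoint.rec with
  | infty =>
    -- wr = u' * v - u * v', v = fp ∞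
    simp only [fp_infty] at hdvd1 hdvd'
    unfold wr
    exact dvd_sub (hdvd1.mul_left _) (hdvd'.mul_left _)
  | coe α =>
    rw [wr_eq_fp u v hcop r hr hr2 α]
    exact dvd_sub (hdvd'.mul_right _) (hdvd1.mul_right _)

/-- Degree bound on the Wronskian. -/
lemma natDegree_wr_le :
    (wr u v).natDegree + (r - 1 - (fp u v (ratMap u v ∞)).natDegree) ≤ 2*r - 2 := by
  have hlt := natDegree_fp_phi_lt u v hcop r hr hr2
  have hvr : v.natDegree ≤ r := by rw [hr]; exact le_max_right _ _
  have key : (wr u v).natDegree ≤ r - 1 + (fp u v (ratMap u v ∞)).natDegree := by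
    by_cases hφ : ratMap u v ∞ = ∞
    · -- u bigger : φ∞ = ∞, fp = v
      have hcase : v.natDegree < u.natDegree := by
        by_contra hc
        rw [ratMap_infty, if_neg hc] at hφ
        split_ifs at hφ with h2
        · exact (coe_ne_infty _) hφ
        · exact (coe_ne_infty _) hφ
      rw [hφ]
      simp only [fp_infty]
      unfold wr
      refine (natDegree_sub_le _ _).trans ?_
      have h1 : (derivative u * v).natDegree ≤ u.natDegree - 1 + v.natDegree :=
        natDegree_mul_le.trans (by have := natDegree_derivative_le u; omega)
      have hru : r = u.natDegree := by omega
      have h2 : (u * derivative v).natDegree ≤ r - 1 + v.natDegree := by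
        by_cases hdv : v.natDegree = 0
        · have hz : derivative v = 0 := by
            rw [Polynomial.eq_C_of_natDegree_eq_zero hdv]; simp
          simp [hz]
        · refine natDegree_mul_le.trans ?_
          have := natDegree_derivative_le v
          omega
      simp only [max_le_iff]
      exact ⟨h1.trans (by omega), h2⟩
    · -- φ∞ is a finite point α
      obtain ⟨α, hα⟩ := ne_infty_iff_exists.mp hφ
      rw [← hα]
      rw [wr_eq_fp u v hcop r hr hr2 α]
      set p := fp u v ((α : ℂ) : OnePoint ℂ) with hp
      refine (natDegree_sub_le _ _).trans ?_
      by_cases hp0 : p.natDegree = 0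
      · have hdp : derivative p = 0 := by
          rw [Polynomial.eq_C_of_natDegree_eq_zero hp0]; simp
        have h2 : (p * derivative v).natDegree ≤ p.natDegree + (v.natDegree - 1) :=
          natDegree_mul_le.trans (by have := natDegree_derivative_le v; omega)
        rw [hdp]
        simp only [zero_mul, natDegree_zero, max_le_iff]
        constructor <;> omega
      · have h1 : (derivative p * v).natDegree ≤ (p.natDegree - 1) + v.natDegree :=
          natDegree_mul_le.trans (by have := natDegree_derivative_le p; omega)
        have h2 : (p * derivative v).natDegree ≤ p.natDegree + (v.natDegree - 1) :=
          natDegree_mul_le.trans (by have := natDegree_derivative_le v; omega)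
        simp only [max_le_iff]
        constructor <;> omega
  omega

lemma card_roots_fp (Q : OnePoint ℂ) :
    Multiset.card (fp u v Q).roots = (fp u v Q).natDegree :=
  splits_iff_card_roots.mp (IsAlgClosed.splits _)

lemma coe_fiberF (Q : OnePoint ℂ) :
    (↑(fiberF u v Q) : Set (OnePoint ℂ)) = ratMap u v ⁻¹' {Q} := by
  ext P
  induction P using OnePoint.rec with
  | infty =>
    simp only [Finset.coe_union, Set.mem_union, Finset.coe_image, Set.mem_image,
      Set.mem_preimage, Set.mem_singleton_iff, Finset.mem_coe, fiberF]
    constructor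
    · rintro (⟨z, _, hz⟩ | hmem)
      · exact absurd hz (coe_ne_infty z)
      · split_ifs at hmem with h
        · simpa using h
        · simp at hmem
    · intro h
      right
      rw [if_pos h]
      simp
  | coe z =>
    simp only [Finset.coe_union, Set.mem_union, Finset.coe_image, Set.mem_image,
      Set.mem_preimage, Set.mem_singleton_iff, Finset.mem_coe, fiberF]
    rw [ratMap_coe_eq_iff u v hcop r hr hr2 z Q]
    constructor
    · rintro (⟨w, hw, hwz⟩ | hmem)
      · rw [OnePoint.coe_eq_coe] at hwz
        subst hwz
        rw [Multiset.mem_toFinset, mem_roots (fp_ne_zero u v hcop r hr hr2 Q)] at hw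
        exact hw
      · split_ifs at hmem with h
        · exact absurd (Finset.mem_singleton.mp hmem) (coe_ne_infty z)
        · simp at hmem
    · intro h
      left
      exact ⟨z, by rw [Multiset.mem_toFinset, mem_roots (fp_ne_zero u v hcop r hr hr2 Q)]; exact h, rfl⟩

lemma card_fiberF (Q : OnePoint ℂ) :
    (fiberF u v Q).card =
      (fp u v Q).roots.toFinset.card + (if ratMap u v ∞ = Q then 1 else 0) := by
  unfold fiberF
  rw [Finset.card_union_of_disjoint, Finset.card_image_of_injective _ OnePoint.coe_injective]
  · congr 1
    split_ifs <;> simp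
  · split_ifs with h
    · simp only [Finset.disjoint_singleton_right, Finset.mem_image]
      rintro ⟨z, _, hz⟩
      exact (coe_ne_infty z) hz
    · simp


lemma fiberF_card_le (Q : OnePoint ℂ) : (fiberF u v Q).card ≤ r := by
  rw [card_fiberF u v hcop r hr hr2 Q]
  have h1 : (fp u v Q).roots.toFinset.card ≤ Multiset.card (fp u v Q).roots :=
    Multiset.toFinset_card_le _
  rw [card_roots_fp u v hcop r hr hr2 Q] at h1
  by_cases hQ : ratMap u v ∞ = Q
  · rw [if_pos hQ]
    have := natDegree_fp_phi_lt u v hcop r hr hr2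
    rw [hQ] at this
    omega
  · rw [if_neg hQ]
    have := natDegree_fp_le u v hcop r hr hr2 Q
    omega

lemma one_le_fiberF_card (Q : OnePoint ℂ) : 1 ≤ (fiberF u v Q).card := by
  rw [card_fiberF u v hcop r hr hr2 Q]
  by_cases hQ : ratMap u v ∞ = Q
  · rw [if_pos hQ]; omega
  · rw [if_neg hQ]
    have hdeg := natDegree_fp_of_ne u v hcop r hr hr2 Q hQ
    have hcard := card_roots_fp u v hcop r hr hr2 Q
    have hne : (fp u v Q).roots ≠ 0 := by
      intro h0
      rw [h0] at hcard
      simp at hcard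
      omega
    have : (fp u v Q).roots.toFinset.Nonempty := by
      obtain ⟨z, hz⟩ := Multiset.exists_mem_of_ne_zero hne
      exact ⟨z, Multiset.mem_toFinset.mpr hz⟩
    have := Finset.card_pos.mpr this
    omega

/-- roots of fiber polynomials over different points are disjoint -/
lemma fp_roots_disjoint (Q Q' : OnePoint ℂ) (hne : Q ≠ Q') :
    Disjoint (fp u v Q).roots.toFinset (fp u v Q').roots.toFinset := by
  rw [Finset.disjoint_left]
  intro z hz hz'
  rw [Multiset.mem_toFinset, mem_roots (fp_ne_zero u v hcop r hr hr2 Q)] at hz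
  rw [Multiset.mem_toFinset, mem_roots (fp_ne_zero u v hcop r hr hr2 Q')] at hz'
  have h1 := (ratMap_coe_eq_iff u v hcop r hr hr2 z Q).mpr hz
  have h2 := (ratMap_coe_eq_iff u v hcop r hr hr2 z Q').mpr hz'
  exact hne (h1.symm.trans h2)

/-- per point deficiency bound -/
lemma deficiency_le (Q : OnePoint ℂ) :
    r - (fiberF u v Q).card ≤
      (∑ z ∈ (fp u v Q).roots.toFinset, (wr u v).rootMultiplicity z) +
        (if ratMap u v ∞ = Q then (r - 1 - (fp u v (ratMap u v ∞)).natDegree) else 0) := by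
  have hcard := card_roots_fp u v hcop r hr hr2 Q
  -- natDegree - #distinct roots ≤ sum of wr-multiplicities
  have hsum1 : ∑ z ∈ (fp u v Q).roots.toFinset, (fp u v Q).rootMultiplicity z
      = (fp u v Q).natDegree := by
    rw [← hcard]
    rw [← Multiset.toFinset_sum_count_eq (fp u v Q).roots]
    refine Finset.sum_congr rfl (fun z _ => ?_)
    rw [count_roots]
  have hmain : (fp u v Q).natDegree - (fp u v Q).roots.toFinset.card ≤
      ∑ z ∈ (fp u v Q).roots.toFinset, (wr u v).rootMultiplicity z := by
    have hsub : ∑ z ∈ (fp u v Q).roots.toFinset, ((fp u v Q).rootMultiplicity z - 1)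
        = (fp u v Q).natDegree - (fp u v Q).roots.toFinset.card := by
      rw [Finset.sum_tsub_distrib, hsum1, Finset.card_eq_sum_ones]
      intro z hz
      rw [Multiset.mem_toFinset, mem_roots (fp_ne_zero u v hcop r hr hr2 Q)] at hz
      exact (rootMultiplicity_pos (fp_ne_zero u v hcop r hr hr2 Q)).mpr hz
    rw [← hsub]
    exact Finset.sum_le_sum (fun z _ => mult_le_wr u v hcop r hr hr2 Q z)
  by_cases hQ : ratMap u v ∞ = Q
  · rw [card_fiberF u v hcop r hr hr2 Q, if_pos hQ, if_pos hQ]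
    have hlt := natDegree_fp_phi_lt u v hcop r hr hr2
    rw [hQ] at hlt ⊢
    have hle : (fp u v Q).roots.toFinset.card ≤ (fp u v Q).natDegree := by
      have := Multiset.toFinset_card_le (fp u v Q).roots
      omega
    omega
  · rw [card_fiberF u v hcop r hr hr2 Q, if_neg hQ, if_neg hQ]
    have hdeg := natDegree_fp_of_ne u v hcop r hr hr2 Q hQ
    omega

/-- Riemann-Hurwitz style global deficiency bound. -/
lemma sum_deficiency_le (S : Finset (OnePoint ℂ)) :
    ∑ Q ∈ S, (r - (fiberF u v Q).card) ≤ 2*r - 2 := by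
  have h1 : ∑ Q ∈ S, (r - (fiberF u v Q).card) ≤
      (∑ Q ∈ S, ∑ z ∈ (fp u v Q).roots.toFinset, (wr u v).rootMultiplicity z) +
      (∑ Q ∈ S, if ratMap u v ∞ = Q then (r - 1 - (fp u v (ratMap u v ∞)).natDegree) else 0) := by
    rw [← Finset.sum_add_distrib]
    exact Finset.sum_le_sum (fun Q _ => deficiency_le u v hcop r hr hr2 Q)
  have h2 : ∑ Q ∈ S, ∑ z ∈ (fp u v Q).roots.toFinset, (wr u v).rootMultiplicity z
      = ∑ z ∈ S.biUnion (fun Q => (fp u v Q).roots.toFinset), (wr u v).rootMultiplicity z := by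
    rw [Finset.sum_biUnion]
    intro Q hQ Q' hQ' hne
    exact fp_roots_disjoint u v hcop r hr hr2 Q Q' hne
  have h3 : ∑ z ∈ S.biUnion (fun Q => (fp u v Q).roots.toFinset), (wr u v).rootMultiplicity z
      ≤ (wr u v).natDegree := by
    have := sum_count_le_card (M := (wr u v).roots) (S.biUnion (fun Q => (fp u v Q).roots.toFinset))
    simp only [count_roots] at this
    exact this.trans ((wr u v).card_roots')
  have h4 : (∑ Q ∈ S, if ratMap u v ∞ = Q then (r - 1 - (fp u v (ratMap u v ∞)).natDegree) else 0)
      ≤ r - 1 - (fp u v (ratMap u v ∞)).natDegree := by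
    rw [Finset.sum_ite_eq]
    split_ifs <;> omega
  have h5 := natDegree_wr_le u v hcop r hr hr2
  omega

lemma coe_LF (k : ℕ) :
    (↑(LF u v k) : Set (OnePoint ℂ)) = (ratMap u v)^[k] ⁻¹' ({∞} : Set (OnePoint ℂ)) := by
  induction k with
  | zero => simp [LF]
  | succ k ih =>
    have : (ratMap u v)^[k+1] ⁻¹' ({∞} : Set (OnePoint ℂ))
        = ratMap u v ⁻¹' ((ratMap u v)^[k] ⁻¹' ({∞} : Set (OnePoint ℂ))) := by
      rw [Function.iterate_succ]
      rfl
    rw [this, ← ih]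
    simp only [LF, Finset.coe_biUnion, Finset.mem_coe]
    ext P
    simp only [Set.mem_iUnion, Set.mem_preimage, Finset.mem_coe]
    constructor
    · rintro ⟨Q, hQ, hP⟩
      have := coe_fiberF u v hcop r hr hr2 Q
      rw [← Finset.mem_coe, this] at hP
      simp only [Set.mem_preimage, Set.mem_singleton_iff] at hP
      rw [hP]
      exact hQ
    · intro h
      refine ⟨ratMap u v P, h, ?_⟩
      rw [← Finset.mem_coe, coe_fiberF u v hcop r hr hr2]
      simp

/-- fibers over distinct points are disjoint -/
lemma fiberF_disjoint (Q Q' : OnePoint ℂ) (hne : Q ≠ Q') :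
    Disjoint (fiberF u v Q) (fiberF u v Q') := by
  rw [Finset.disjoint_left]
  intro P hP hP'
  rw [← Finset.mem_coe, coe_fiberF u v hcop r hr hr2] at hP hP'
  simp only [Set.mem_preimage, Set.mem_singleton_iff] at hP hP'
  exact hne (hP.symm.trans hP')

lemma card_LF_succ (k : ℕ) :
    (LF u v (k+1)).card = ∑ Q ∈ LF u v k, (fiberF u v Q).card := by
  show ((LF u v k).biUnion _).card = _
  exact Finset.card_biUnion (fun Q _ Q' _ hne => fiberF_disjoint u v hcop r hr hr2 Q Q' hne)

include hcop hr hr2 in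
lemma LF_disjoint (hper : ∀ m : ℕ, 1 ≤ m → (ratMap u v)^[m] ∞ ≠ ∞)
    (j k : ℕ) (hjk : j < k) : Disjoint (LF u v j) (LF u v k) := by
  rw [Finset.disjoint_left]
  intro P hPj hPk
  rw [← Finset.mem_coe, coe_LF u v hcop r hr hr2] at hPj hPk
  simp only [Set.mem_preimage, Set.mem_singleton_iff] at hPj hPk
  have : (ratMap u v)^[k - j] ∞ = ∞ := by
    have h1 : (ratMap u v)^[(k - j) + j] P = ∞ := by
      rw [show (k - j) + j = k by omega]
      exact hPk
    rw [Function.iterate_add_apply, hPj] at h1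
    exact h1
  exact hper (k - j) (by omega) this

theorem poles_of_iterate_ge_of_infty_not_periodic'
    (hper : ∀ m : ℕ, 1 ≤ m → (ratMap u v)^[m] ∞ ≠ ∞) :
    ∀ n : ℕ, 2 ≤ n →
      r ^ (n - 2) ≤ ((ratMap u v)^[n] ⁻¹' ({∞} : Set (OnePoint ℂ))).ncard := by
  intro n hn
  -- translate to finset cardinalities
  rw [← coe_LF u v hcop r hr hr2 n, Set.ncard_coe_finset]
  set a : ℕ → ℕ := fun k => (LF u v k).card with ha
  set d : ℕ → ℕ := fun k => ∑ Q ∈ LF u v k, (r - (fiberF u v Q).card) with hd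
  have ha0 : a 0 = 1 := by simp [ha, LF]
  have haeq : ∀ k, a (k+1) + d k = r * a k := by
    intro k
    rw [ha, hd]
    simp only
    rw [card_LF_succ u v hcop r hr hr2 k, ← Finset.sum_add_distrib]
    have hcongr : ∑ Q ∈ LF u v k, ((fiberF u v Q).card + (r - (fiberF u v Q).card))
        = ∑ _Q ∈ LF u v k, r := by
      refine Finset.sum_congr rfl (fun Q _ => ?_)
      have h1 := fiberF_card_le u v hcop r hr hr2 Q
      omega
    rw [hcongr, Finset.sum_const, smul_eq_mul, mul_comm]
  have hamono : ∀ k, a k ≤ a (k+1) := by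
    intro k
    rw [ha]
    simp only
    rw [card_LF_succ u v hcop r hr hr2 k]
    calc (LF u v k).card = ∑ _Q ∈ LF u v k, 1 := by rw [Finset.sum_const, smul_eq_mul, mul_one]
      _ ≤ ∑ Q ∈ LF u v k, (fiberF u v Q).card :=
          Finset.sum_le_sum (fun Q _ => one_le_fiberF_card u v hcop r hr hr2 Q)
  have hapos : ∀ k, 1 ≤ a k := by
    intro k
    induction k with
    | zero => omega
    | succ k ih => exact ih.trans (hamono k)
  have hdsum : ∑ k ∈ Finset.range n, d k ≤ 2*r - 2 := by
    rw [hd]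
    simp only
    rw [← Finset.sum_biUnion (by
      intro j hj k hk hjk
      rcases Nat.lt_or_ge j k with h | h
      · exact LF_disjoint u v hcop r hr hr2 hper j k h
      · exact (LF_disjoint u v hcop r hr hr2 hper k j (by omega)).symm)]
    exact sum_deficiency_le u v hcop r hr hr2 _
  have hstep : ∀ k, a k * max 1 (r - d k) ≤ a (k+1) := by
    intro k
    rcases Nat.lt_or_ge (d k) r with hdk | hdk
    · have hmax : max 1 (r - d k) = r - d k := by omega
      rw [hmax]
      have heq := haeq k
      have hA := hapos k
      set A := a k
      set D := d k
      set C := r - D with hC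
      have hrC : r = D + C := by omega
      have h1 : a (k+1) + D = A * D + A * C := by
        rw [heq, hrC]; ring
      have h2 : D ≤ A * D := Nat.le_mul_of_pos_left D hA
      omega
    · have hmax : max 1 (r - d k) = 1 := by omega
      rw [hmax, mul_one]
      exact hamono k
  have hprod : ∀ m : ℕ, ∏ k ∈ Finset.range m, max 1 (r - d k) ≤ a m := by
    intro m
    induction m with
    | zero => simp [ha0]
    | succ m ih =>
      rw [Finset.prod_range_succ]
      calc (∏ k ∈ Finset.range m, max 1 (r - d k)) * max 1 (r - d m)
          ≤ a m * max 1 (r - d m) := Nat.mul_le_mul_right _ ih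
        _ ≤ a (m+1) := hstep m
  -- power trick
  have hfac : ∀ k, r ^ ((r-1) - d k) ≤ (max 1 (r - d k)) ^ (r - 1) := by
    intro k
    rcases le_or_gt (d k) (r - 1) with hdk | hdk
    · have hm1 : 1 ≤ r - d k := by omega
      have hmax : max 1 (r - d k) = r - d k := by omega
      have hexp : (r - 1) - d k = (r - d k) - 1 := by omega
      rw [hmax, hexp]
      exact keyNat2 (r - d k) r hm1 (by omega)
    · have hexp : (r - 1) - d k = 0 := by omega
      rw [hexp, pow_zero]
      exact Nat.one_le_pow _ _ (by omega)
  have hsumexp : (n - 2) * (r - 1) ≤ ∑ k ∈ Finset.range n, ((r-1) - d k) := by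
    have hsplit : ∑ k ∈ Finset.range n, ((r-1) - d k) + ∑ k ∈ Finset.range n, min (d k) (r-1)
        = n * (r-1) := by
      rw [← Finset.sum_add_distrib]
      have hcongr : ∑ k ∈ Finset.range n, ((r-1) - d k + min (d k) (r-1))
          = ∑ _k ∈ Finset.range n, (r-1) := by
        refine Finset.sum_congr rfl (fun k _ => ?_)
        omega
      rw [hcongr, Finset.sum_const, Finset.card_range, smul_eq_mul]
    have hminle : ∑ k ∈ Finset.range n, min (d k) (r-1) ≤ 2*r - 2 :=
      (Finset.sum_le_sum (fun k _ => min_le_left _ _)).trans hdsum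
    have hmul : (n - 2) * (r - 1) = n * (r-1) - 2 * (r-1) := by
      rw [Nat.sub_mul]
    omega
  have hchain : (r ^ (n-2)) ^ (r-1) ≤ (a n) ^ (r-1) := by
    calc (r ^ (n-2)) ^ (r-1) = r ^ ((n-2) * (r-1)) := by rw [← pow_mul]
      _ ≤ r ^ (∑ k ∈ Finset.range n, ((r-1) - d k)) :=
          Nat.pow_le_pow_right (by omega) hsumexp
      _ = ∏ k ∈ Finset.range n, r ^ ((r-1) - d k) :=
          (Finset.prod_pow_eq_pow_sum _ _ _).symm
      _ ≤ ∏ k ∈ Finset.range n, (max 1 (r - d k)) ^ (r - 1) :=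
          Finset.prod_le_prod' (fun k _ => hfac k)
      _ = (∏ k ∈ Finset.range n, max 1 (r - d k)) ^ (r - 1) := by
          rw [Finset.prod_pow]
      _ ≤ (a n) ^ (r-1) := Nat.pow_le_pow_left (hprod n) _
  exact (Nat.pow_le_pow_iff_left (by omega : r - 1 ≠ 0)).mp hchain

end setup

/-- If `φ = u/v` is a rational map on `ℙ¹(ℂ)` of degree `r ≥ 2` such that `∞` is not a
periodic point of `φ`, then for all `n ≥ 2` the iterate `φⁿ` has at least `r^{n-2}`
distinct poles (preimages of `∞`). -/
theorem poles_of_iterate_ge_of_infty_not_periodic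
    (u v : Polynomial ℂ) (hcop : IsCoprime u v) (r : ℕ)
    (hr : r = max u.natDegree v.natDegree) (hr2 : 2 ≤ r)
    (hper : ∀ m : ℕ, 1 ≤ m → (ratMap u v)^[m] ∞ ≠ ∞) :
    ∀ n : ℕ, 2 ≤ n →
      r ^ (n - 2) ≤ ((ratMap u v)^[n] ⁻¹' ({∞} : Set (OnePoint ℂ))).ncard := by
  intro n hn
  exact poles_of_iterate_ge_of_infty_not_periodic' u v hcop r hr hr2 hper n hn
end
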